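/- Fix n > 3. For each i : Fin n let U_i be the permutation of states (Fin n → ZMod 2) that leaves the state unchanged when (y_{i−1}, y_{i+1}) = (0, 1) and replaces y_i by y_i + 1 otherwise (the Wolfram rule 57 local function at i; each U_i is an involution). Then the subgroup of the permutation group of (Fin n → ZMod 2) generated by {U_i ∣ i : Fin n} acts transitively on (Fin n → ZMod 2), and for n > 4 each U_i is an even permutation of (Fin n → ZMod 2). -/

import Mathlib

set_option synthInstance.maxHeartbeats 400000

/-- A finset admitting a fixed-point-free involution has even cardinality. -/
lemma even_card_of_invol {α : Type*} [DecidableEq α] (f : α → α) (s : Finset α)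
    (h1 : ∀ a ∈ s, f a ∈ s) (h2 : ∀ a ∈ s, f (f a) = a) (h3 : ∀ a ∈ s, f a ≠ a) :
    Even s.card := by
  suffices H : ∀ (m : ℕ) (s : Finset α), s.card = m → (∀ a ∈ s, f a ∈ s) →
      (∀ a ∈ s, f (f a) = a) → (∀ a ∈ s, f a ≠ a) → Even s.card from
    H s.card s rfl h1 h2 h3
  intro m
  induction m using Nat.strong_induction_on with
  | _ m ih =>
    intro s hcard h1 h2 h3
    rcases s.eq_empty_or_nonempty with rfl | ⟨a, ha⟩
    · simp
    · have hfa : f a ∈ s := h1 a ha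
      have hfane : f a ≠ a := h3 a ha
      set t := (s.erase a).erase (f a) with ht
      have hmem : ∀ b, b ∈ t ↔ b ∈ s ∧ b ≠ a ∧ b ≠ f a := by
        intro b
        simp only [ht, Finset.mem_erase]
        tauto
      have htcard : t.card = m - 2 := by
        rw [ht, Finset.card_erase_of_mem (Finset.mem_erase.mpr ⟨hfane, hfa⟩),
          Finset.card_erase_of_mem ha, hcard]
        omega
      have hm2 : 2 ≤ m := by
        have hsub : ({a, f a} : Finset α) ⊆ s := by
          intro x hx
          rcases Finset.mem_insert.mp hx with rfl | hx
          · exact ha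
          · rw [Finset.mem_singleton.mp hx]; exact hfa
        have := Finset.card_le_card hsub
        rwa [Finset.card_insert_of_notMem (by simpa using hfane.symm),
          Finset.card_singleton, hcard] at this
      have hEven : Even t.card := by
        refine ih (m - 2) (by omega) t htcard ?_ ?_ ?_
        · intro b hb
          obtain ⟨hbs, hba, hbfa⟩ := (hmem b).mp hb
          refine (hmem (f b)).mpr ⟨h1 b hbs, ?_, ?_⟩
          · intro h
            exact hbfa (by rw [← h2 b hbs, h])
          · intro h
            exact hba (by rw [← h2 b hbs, h, h2 a ha])
        · intro b hb
          exact h2 b ((hmem b).mp hb).1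
        · intro b hb
          exact h3 b ((hmem b).mp hb).1
      have : s.card = t.card + 2 := by omega
      rw [this]
      exact hEven.add (by norm_num)

theorem stmt_13 {n : ℕ} [NeZero n] (hn : 3 < n)
    (U : Fin n → Equiv.Perm (Fin n → ZMod 2))
    (hU : ∀ (i : Fin n) (y : Fin n → ZMod 2),
      U i y = if y (i - 1) = 0 ∧ y (i + 1) = 1
        then y else Function.update y i (y i + 1)) :
    MulAction.IsPretransitive
      ↥(Subgroup.closure (Set.range U)) (Fin n → ZMod 2) ∧
    (4 < n → ∀ i : Fin n, Equiv.Perm.sign (U i) = 1) := by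
  have hzm : ∀ v : ZMod 2, v ≠ 1 → v = 0 := by decide
  have hzm1 : (1 : ZMod 2) ≠ 0 := by decide
  have hflip : ∀ k : Fin n, ∀ x : Fin n → ZMod 2, x k = 0 →
      (Finset.univ.filter fun j => Function.update x k 1 j = 0) =
        (Finset.univ.filter fun j => x j = 0).erase k := by
    intro k x hk
    ext j
    simp only [Finset.mem_filter, Finset.mem_erase, Finset.mem_univ, true_and]
    by_cases h : j = k
    · subst h
      simp [Function.update_self, hzm1]
    · simp [Function.update_of_ne h, h]
  -- Every state can be moved to the all-ones state.
  have key : ∀ (m : ℕ) (x : Fin n → ZMod 2),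
      (Finset.univ.filter fun j => x j = 0).card = m →
      ∃ g ∈ Subgroup.closure (Set.range U), g x = fun _ => (1 : ZMod 2) := by
    intro m
    induction m using Nat.strong_induction_on with
    | _ m ih =>
      intro x hx
      by_cases hall : ∀ j, x j = 1
      · exact ⟨1, one_mem _, by funext j; simp [hall j]⟩
      · push_neg at hall
        obtain ⟨i, hi⟩ := hall
        have hxi : x i = 0 := hzm _ hi
        have himem : i ∈ Finset.univ.filter fun j => x j = 0 := by
          simp [hxi]
        by_cases hc : x (i - 1) = 0 ∧ x (i + 1) = 1
        · -- flip at i - 1 : the condition at i - 1 fails since x ((i-1)+1) = x i = 0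
          have hstep : U (i - 1) x = Function.update x (i - 1) 1 := by
            rw [hU]
            rw [if_neg, hc.1]
            · norm_num
            · rw [sub_add_cancel]
              rintro ⟨-, h⟩
              rw [hxi] at h
              exact hzm1 h.symm
          have hi1mem : (i - 1) ∈ Finset.univ.filter fun j => x j = 0 := by
            simp [hc.1]
          have hcard : (Finset.univ.filter
              fun j => Function.update x (i - 1) 1 j = 0).card = m - 1 := by
            rw [hflip _ _ hc.1, Finset.card_erase_of_mem hi1mem, hx]
          have hm1 : 1 ≤ m := by
            rw [← hx]
            exact Finset.card_pos.mpr ⟨i, himem⟩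
          obtain ⟨g, hg, hgx⟩ := ih (m - 1) (by omega) _ hcard
          refine ⟨g * U (i - 1), mul_mem hg (Subgroup.subset_closure ⟨i - 1, rfl⟩), ?_⟩
          rw [Equiv.Perm.mul_apply, hstep, hgx]
        · -- flip at i directly
          have hstep : U i x = Function.update x i 1 := by
            rw [hU, if_neg hc, hxi]
            norm_num
          have hcard : (Finset.univ.filter
              fun j => Function.update x i 1 j = 0).card = m - 1 := by
            rw [hflip _ _ hxi, Finset.card_erase_of_mem himem, hx]
          have hm1 : 1 ≤ m := by
            rw [← hx]
            exact Finset.card_pos.mpr ⟨i, himem⟩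
          obtain ⟨g, hg, hgx⟩ := ih (m - 1) (by omega) _ hcard
          refine ⟨g * U i, mul_mem hg (Subgroup.subset_closure ⟨i, rfl⟩), ?_⟩
          rw [Equiv.Perm.mul_apply, hstep, hgx]
  constructor
  · constructor
    intro x y
    obtain ⟨g, hg, hgx⟩ := key _ x rfl
    obtain ⟨g', hg', hgy⟩ := key _ y rfl
    refine ⟨(⟨g', hg'⟩ : Subgroup.closure (Set.range U))⁻¹ * ⟨g, hg⟩, ?_⟩
    have : ∀ (h : Equiv.Perm (Fin n → ZMod 2)) (hh : h ∈ Subgroup.closure (Set.range U))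
        (z : Fin n → ZMod 2),
        ((⟨h, hh⟩ : Subgroup.closure (Set.range U)) : Subgroup.closure (Set.range U)) • z
          = h z := fun _ _ _ => rfl
    show (g'⁻¹ * g) x = y
    rw [Equiv.Perm.mul_apply, hgx, ← hgy, Equiv.Perm.inv_def, Equiv.symm_apply_apply]
  · intro hn4 i
    have h10 : (1 : Fin n) ≠ 0 := by
      simp only [Ne, Fin.one_eq_zero_iff]
      omega
    have hne1 : i - 1 ≠ i := fun h => h10 (by rwa [sub_eq_self] at h)
    have hne2 : i + 1 ≠ i := fun h => h10 (by
      have : i + 1 = i + 0 := by rwa [add_zero]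
      exact add_left_cancel this)
    set C := { j : Fin n // j ≠ i } with hC
    let a : C := ⟨i - 1, hne1⟩
    let b : C := ⟨i + 1, hne2⟩
    let e : (Fin n → ZMod 2) ≃ ZMod 2 × (C → ZMod 2) := Equiv.funSplitAt i (ZMod 2)
    let σ : (C → ZMod 2) → Equiv.Perm (ZMod 2) :=
      fun c => if c a = 0 ∧ c b = 1 then 1 else Equiv.swap 0 1
    have hswap : ∀ v : ZMod 2, Equiv.swap (0 : ZMod 2) 1 v = v + 1 := by decide
    have hkey : e.permCongr (U i) = Equiv.prodCongrLeft σ := by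
      apply Equiv.ext
      rintro ⟨v, c⟩
      have hxi : e.symm (v, c) i = v := by
        rw [Equiv.funSplitAt_symm_apply, dif_pos rfl]
      have hxa : e.symm (v, c) (i - 1) = c a := by
        rw [Equiv.funSplitAt_symm_apply, dif_neg hne1]
      have hxb : e.symm (v, c) (i + 1) = c b := by
        rw [Equiv.funSplitAt_symm_apply, dif_neg hne2]
      rw [Equiv.permCongr_apply, hU, Equiv.prodCongrLeft_apply]
      by_cases hgood : c a = 0 ∧ c b = 1
      · rw [if_pos (by rw [hxa, hxb]; exact hgood), Equiv.apply_symm_apply]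
        simp only [σ, if_pos hgood, Equiv.Perm.one_apply]
      · rw [if_neg (by rw [hxa, hxb]; exact hgood)]
        have hupd : Function.update (e.symm (v, c)) i (e.symm (v, c) i + 1)
            = e.symm (v + 1, c) := by
          funext j
          by_cases h : j = i
          · subst h
            rw [Function.update_self, hxi, Equiv.funSplitAt_symm_apply, dif_pos rfl]
          · rw [Function.update_of_ne h, Equiv.funSplitAt_symm_apply,
              Equiv.funSplitAt_symm_apply, dif_neg h, dif_neg h]
        rw [hupd, Equiv.apply_symm_apply]
        simp only [σ, if_neg hgood, hswap v]
    have hsign : Equiv.Perm.sign (U i) = ∏ c : C → ZMod 2, Equiv.Perm.sign (σ c) := by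
      rw [← Equiv.Perm.sign_permCongr e, hkey, Equiv.Perm.sign_prodCongrLeft]
    rw [hsign]
    have hσ : ∀ c : C → ZMod 2, Equiv.Perm.sign (σ c)
        = if c a = 0 ∧ c b = 1 then 1 else -1 := by
      intro c
      simp only [σ, apply_ite Equiv.Perm.sign, Equiv.Perm.sign_one,
        Equiv.Perm.sign_swap (by decide : (0 : ZMod 2) ≠ 1)]
    simp only [hσ]
    rw [Finset.prod_ite, Finset.prod_const, Finset.prod_const, one_pow, one_mul]
    -- the number of "bad" contexts is even
    have hd : ∃ d : Fin n, d ≠ i ∧ d ≠ i - 1 ∧ d ≠ i + 1 := by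
      by_contra h
      push_neg at h
      have hsub : (Finset.univ : Finset (Fin n)) ⊆ {i, i - 1, i + 1} := by
        intro j _
        by_cases h1 : j = i
        · simp [h1]
        by_cases h2 : j = i - 1
        · simp [h2]
        simp [h j h1 h2]
      have := Finset.card_le_card hsub
      have h3 : ({i, i - 1, i + 1} : Finset (Fin n)).card ≤ 3 := by
        apply le_trans (Finset.card_insert_le _ _)
        have := Finset.card_insert_le (i - 1) ({i + 1} : Finset (Fin n))
        simp at this ⊢
        omega
      rw [Finset.card_univ, Fintype.card_fin] at this
      omega
    obtain ⟨d, hdi, hda, hdb⟩ := hd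
    set d' : C := ⟨d, hdi⟩ with hd'
    have hd'a : d' ≠ a := fun h => hda (congrArg Subtype.val h)
    have hd'b : d' ≠ b := fun h => hdb (congrArg Subtype.val h)
    have heven : Even (Finset.univ.filter
        fun c : C → ZMod 2 => ¬(c a = 0 ∧ c b = 1)).card := by
      apply even_card_of_invol (fun c => Function.update c d' (c d' + 1))
      · intro c hc
        simp only [Finset.mem_filter, Finset.mem_univ, true_and] at hc ⊢
        rwa [Function.update_of_ne (Ne.symm hd'a), Function.update_of_ne (Ne.symm hd'b)]
      · intro c _
        have h2 : ∀ w : ZMod 2, w + 1 + 1 = w := by decide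
        funext j
        by_cases h : j = d'
        · rw [h, Function.update_self, Function.update_self, h2]
        · rw [Function.update_of_ne h, Function.update_of_ne h]
      · intro c _ h
        have hne : ∀ w : ZMod 2, w + 1 ≠ w := by decide
        have := congrFun h d'
        rw [Function.update_self] at this
        exact hne _ this
    exact heven.neg_one_pow
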